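/- Let C be an η-prox-regular closed set in R^d. Then for every ε < η/8, the enlargement C_ε := C + ε B̄ = {x : d_C(x) ≤ ε} is (η/8)-prox-regular. -/
import Mathlib


open Metric Set MeasureTheory
open scoped RealInnerProductSpace NNReal

def projSet {d : ℕ} (C : Set (EuclideanSpace ℝ (Fin d))) (z : EuclideanSpace ℝ (Fin d)) :
    Set (EuclideanSpace ℝ (Fin d)) :=
  {y | y ∈ C ∧ dist z y = Metric.infDist z C}

def proxNormalCone {d : ℕ} (C : Set (EuclideanSpace ℝ (Fin d)))
    (x : EuclideanSpace ℝ (Fin d)) : Set (EuclideanSpace ℝ (Fin d)) :=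
  {v | ∃ s : ℝ, 0 < s ∧ x ∈ projSet C (x + s • v)}

def IsProxRegular {d : ℕ} (η : ℝ) (C : Set (EuclideanSpace ℝ (Fin d))) : Prop :=
  ∀ x ∈ C, ∀ v ∈ proxNormalCone C x, v ≠ 0 →
    Metric.ball (x + (η / ‖v‖) • v) η ∩ C = ∅

private lemma le_infDist_aux {d : ℕ} {C : Set (EuclideanSpace ℝ (Fin d))} (hC : C.Nonempty)
    {b : ℝ} {x : EuclideanSpace ℝ (Fin d)} (h : ∀ y ∈ C, b ≤ dist x y) :
    b ≤ Metric.infDist x C := by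
  by_contra hlt
  obtain ⟨y, hy, hd⟩ := (Metric.infDist_lt_iff hC).1 (lt_of_not_ge hlt)
  exact absurd (h y hy) (not_le.2 hd)

/-- The ε-enlargement of an η-prox-regular set is (η/8)-prox-regular for ε < η/8. -/
theorem enlargement_proxRegular {d : ℕ} (η : ℝ) (hη : 0 < η)
    (C : Set (EuclideanSpace ℝ (Fin d))) (hC : IsClosed C) (hreg : IsProxRegular η C)
    (ε : ℝ) (hε : ε < η / 8) :
    IsProxRegular (η / 8) {x : EuclideanSpace ℝ (Fin d) | Metric.infDist x C ≤ ε} := by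
  set r : ℝ := η / 8 with hr
  set Cε : Set (EuclideanSpace ℝ (Fin d)) := {x | Metric.infDist x C ≤ ε} with hCε
  intro x hx v hv hv0
  obtain ⟨s, hs, hxC, hproj⟩ := hv
  set z : EuclideanSpace ℝ (Fin d) := x + s • v with hz
  have hzx : dist z x = s * ‖v‖ := by
    rw [hz, dist_eq_norm, add_sub_cancel_left, norm_smul, Real.norm_eq_abs, abs_of_pos hs]
  have hv0' : 0 < ‖v‖ := norm_pos_iff.2 hv0
  have hsv : 0 < s * ‖v‖ := mul_pos hs hv0'
  have hε0 : 0 ≤ ε := le_trans Metric.infDist_nonneg hx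
  -- C is nonempty
  rcases C.eq_empty_or_nonempty with hCemp | hCne
  · exfalso
    have hzCε : z ∈ Cε := by simp [hCε, hCemp, Metric.infDist_empty, hε0]
    have : infDist z Cε ≤ 0 := by
      simpa using Metric.infDist_le_dist_of_mem hzCε (x := z)
    rw [← hproj, hzx] at this
    exact absurd this (not_le.2 hsv)
  obtain ⟨p, hpC, hp⟩ := hC.exists_infDist_eq_dist hCne x
  -- infDist z C ≥ ε + s‖v‖
  have hdzC : ε + s * ‖v‖ ≤ Metric.infDist z C := by
    apply le_infDist_aux hCne
    intro c hc
    by_contra hD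
    push_neg at hD
    set D : ℝ := dist z c with hDdef
    rcases le_or_gt D ε with hDε | hDε
    · -- then z itself is in Cε, contradicting dist z x = infDist z Cε > 0
      have hzCε : z ∈ Cε := le_trans (Metric.infDist_le_dist_of_mem hc) hDε
      have : infDist z Cε ≤ 0 := by
        simpa using Metric.infDist_le_dist_of_mem hzCε (x := z)
      rw [← hproj, hzx] at this
      exact absurd this (not_le.2 hsv)
    · have hD0 : 0 < D := lt_of_le_of_lt hε0 hDε
      set q : EuclideanSpace ℝ (Fin d) := c + (ε / D) • (z - c) with hq
      have hqc : dist q c = ε := by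
        rw [hq, dist_eq_norm, add_sub_cancel_left, norm_smul, Real.norm_eq_abs,
          abs_of_nonneg (div_nonneg hε0 hD0.le), ← dist_eq_norm, ← hDdef]
        field_simp
      have hqCε : q ∈ Cε := le_trans (Metric.infDist_le_dist_of_mem hc) hqc.le
      have hzq : dist z q = D - ε := by
        have : z - q = (1 - ε / D) • (z - c) := by
          rw [hq]; rw [sub_smul, one_smul]; abel
        rw [dist_eq_norm, this, norm_smul, Real.norm_eq_abs,
          abs_of_nonneg (by rw [sub_nonneg]; exact (div_le_one hD0).2 hDε.le),
          ← dist_eq_norm, ← hDdef]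
        field_simp
      have h1 : s * ‖v‖ ≤ D - ε := by
        rw [← hzq]
        rw [← hzx, hproj]
        exact Metric.infDist_le_dist_of_mem hqCε
      linarith
  -- dist z p, triangle equality
  have hxp : dist x p ≤ ε := hp ▸ hx
  have htri : dist z p ≤ s * ‖v‖ + dist x p := by
    calc dist z p ≤ dist z x + dist x p := dist_triangle z x p
    _ = s * ‖v‖ + dist x p := by rw [hzx]
  have hzp_le : Metric.infDist z C ≤ dist z p := Metric.infDist_le_dist_of_mem hpC
  have hxpε : dist x p = ε := by linarith
  have hzp : dist z p = ε + s * ‖v‖ := by linarith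
  have hdzC' : Metric.infDist z C = ε + s * ‖v‖ := by linarith
  set L : ℝ := ε + s * ‖v‖ with hL
  have hL0 : 0 < L := by positivity
  set u : EuclideanSpace ℝ (Fin d) := L⁻¹ • (z - p) with hu
  have hzpnorm : ‖z - p‖ = L := by rw [← dist_eq_norm, hzp]
  have hunorm : ‖u‖ = 1 := by
    rw [hu, norm_smul, Real.norm_eq_abs, abs_of_pos (inv_pos.2 hL0), hzpnorm]
    field_simp
  have hzpu : z - p = L • u := by
    rw [hu, smul_smul, mul_inv_cancel₀ hL0.ne', one_smul]
  -- x is between p and z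
  have hbtw : Wbtw ℝ p x z := by
    rw [← dist_add_dist_eq_iff]
    rw [dist_comm p x, dist_comm x z, dist_comm p z, hzx, hzp, hxpε]
  have hxeq : x = p + ε • u := by
    obtain ⟨t, ht, hmap⟩ := hbtw
    have hmap' : x = p + t • (z - p) := by
      rw [← hmap, AffineMap.lineMap_apply, vsub_eq_sub, vadd_eq_add]
      abel
    have hxpvec : x - p = t • (z - p) := by rw [hmap']; abel
    have htval : t * L = ε := by
      have : ‖x - p‖ = ‖t • (z - p)‖ := by rw [hxpvec]
      rw [← dist_eq_norm, hxpε, norm_smul, Real.norm_eq_abs, abs_of_nonneg ht.1,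
        hzpnorm] at this
      linarith
    rw [hmap', hzpu, smul_smul, htval]
  -- v = ‖v‖ • u
  have hveq : v = ‖v‖ • u := by
    have h1 : s • v = (s * ‖v‖) • u := by
      have hzxv : s • v = z - x := by rw [hz]; abel
      rw [hzxv, hxeq, show z - (p + ε • u) = (z - p) - ε • u by abel, hzpu, ← sub_smul, hL]
      ring_nf
    have h2 : s • v = s • (‖v‖ • u) := by rw [h1, mul_smul]
    exact smul_right_injective (EuclideanSpace ℝ (Fin d)) hs.ne' h2
  -- u is a proximal normal to C at p
  have hcone : u ∈ proxNormalCone C p := by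
    refine ⟨L, hL0, hpC, ?_⟩
    have hpz : p + L • u = z := by rw [← hzpu]; abel
    rw [hpz, hzp, hdzC']
  have hu0 : u ≠ 0 := by
    intro h; rw [h, norm_zero] at hunorm; norm_num at hunorm
  have hball := hreg p hpC u hcone hu0
  rw [hunorm, div_one] at hball
  -- conclude
  rw [Set.eq_empty_iff_forall_notMem]
  rintro y ⟨hy1, hy2⟩
  have hcenter : x + (r / ‖v‖) • v = p + (ε + r) • u := by
    have h3 : (r / ‖v‖) • v = r • u := by
      calc (r / ‖v‖) • v = (r / ‖v‖) • (‖v‖ • u) := by rw [← hveq]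
      _ = r • u := by rw [smul_smul, div_mul_cancel₀ _ hv0'.ne']
    rw [h3, hxeq, add_smul]; abel
  rw [hcenter] at hy1
  have hy1' : dist y (p + (ε + r) • u) < r := mem_ball.1 hy1
  have hcc : dist (p + (ε + r) • u) (p + η • u) = η - ε - r := by
    rw [dist_eq_norm, show p + (ε + r) • u - (p + η • u) = (ε + r - η) • u by
      rw [sub_smul, add_smul]; abel, norm_smul, Real.norm_eq_abs, hunorm, mul_one,
      abs_of_nonpos (by have hε' : ε < η / 8 := hε; have hrval : r = η / 8 := rfl; linarith)]
    ring
  have hyc : dist y (p + η • u) < η - ε := by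
    calc dist y (p + η • u) ≤ dist y (p + (ε + r) • u) + dist (p + (ε + r) • u) (p + η • u) :=
          dist_triangle _ _ _
    _ < r + (η - ε - r) := by rw [hcc]; linarith
    _ = η - ε := by ring
  have hfar : ∀ c ∈ C, ε < dist y c := by
    intro c hc
    have hcball : dist c (p + η • u) ≥ η := by
      by_contra h
      push_neg at h
      exact Set.eq_empty_iff_forall_notMem.1 hball c ⟨mem_ball.2 h, hc⟩
    have := dist_triangle c y (p + η • u)
    rw [dist_comm c y] at this
    linarith
  have : ε < Metric.infDist y C := by
    obtain ⟨c, hc, hyc'⟩ := hC.exists_infDist_eq_dist hCne y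
    rw [hyc']; exact hfar c hc
  rw [hCε] at hy2
  exact absurd hy2 (not_le.2 this)
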